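/- Let d ∈ ℕ, e, h ∈ ℝ with e < h, r : Fin d → ℝ, and W ∈ [0,1]. Let B := Set.univ.pi (fun i => Set.Icc e h) and B' := Set.univ.pi (fun i => Set.Icc (e − r i) (h − r i)), with uniform probability measures μ₀ := ((volume B)⁻¹ • volume.restrict B) and μ₁ := ((volume B')⁻¹ • volume.restrict B'). Set b₀ := 1 − ∏ i, max 0 (1 − |r i| / (h − e)). Then β₂*(1 − W; μ₀, μ₁) = max 0 (W − b₀). -/

import Mathlib

open MeasureTheory
open scoped ENNReal

/-- The optimal type-II error at type-I level `α` for testing the null `μ₀`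
against the alternative `μ₁`. -/
noncomputable def beta2Star {Ω : Type*} [MeasurableSpace Ω]
    (α : ℝ) (μ₀ μ₁ : Measure Ω) : ℝ :=
  ⨅ φ : {φ : Ω → ℝ // Measurable φ ∧ (∀ x, 0 ≤ φ x ∧ φ x ≤ 1) ∧ ∫ x, φ x ∂μ₀ ≤ α},
    ∫ x, (1 - φ.1 x) ∂μ₁

private lemma ofReal_max_zero (x : ℝ) :
    ENNReal.ofReal (max 0 x) = ENNReal.ofReal x := by
  rcases le_total 0 x with hx | hx
  · rw [max_eq_right hx]
  · rw [max_eq_left hx, ENNReal.ofReal_of_nonpos hx, ENNReal.ofReal_zero]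

/-- The optimal type-II error for testing the uniform distribution on `[e,h]^d` (null)
against the uniform distribution on its shift by `r` (alternative) at type-I level
`1 − W` equals `max 0 (W − b₀)` with `b₀ = 1 − ∏ᵢ (1 − |rᵢ|/(h−e))₊`. -/
theorem uniform_optimal_type_II (d : ℕ) (e h : ℝ) (heh : e < h) (r : Fin d → ℝ)
    (W : ℝ) (hW : W ∈ Set.Icc (0 : ℝ) 1) :
    beta2Star (1 - W)
        ((volume (Set.univ.pi fun _ : Fin d => Set.Icc e h))⁻¹ •
          volume.restrict (Set.univ.pi fun _ : Fin d => Set.Icc e h))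
        ((volume (Set.univ.pi fun i : Fin d => Set.Icc (e - r i) (h - r i)))⁻¹ •
          volume.restrict (Set.univ.pi fun i : Fin d => Set.Icc (e - r i) (h - r i)))
      = max 0 (W - (1 - ∏ i, max 0 (1 - |r i| / (h - e)))) := by
  classical
  obtain ⟨hW0, hW1⟩ := hW
  have hhe : (0:ℝ) < h - e := sub_pos.2 heh
  set B : Set (Fin d → ℝ) := Set.univ.pi fun _ : Fin d => Set.Icc e h with hBdef
  set B' : Set (Fin d → ℝ) := Set.univ.pi fun i : Fin d => Set.Icc (e - r i) (h - r i)
    with hB'def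
  set S : Set (Fin d → ℝ) := B ∩ B' with hSdef
  have hBm : MeasurableSet B := MeasurableSet.univ_pi fun i => measurableSet_Icc
  have hB'm : MeasurableSet B' := MeasurableSet.univ_pi fun i => measurableSet_Icc
  have hSm : MeasurableSet S := hBm.inter hB'm
  have hSB : S ∩ B = S := Set.inter_eq_left.2 Set.inter_subset_left
  have hSB' : S ∩ B' = S := Set.inter_eq_left.2 Set.inter_subset_right
  set p : ℝ := ∏ i, max 0 (1 - |r i| / (h - e)) with hpdef
  have hm0 : ∀ i : Fin d, 0 ≤ max 0 (1 - |r i| / (h - e)) := fun i => le_max_left _ _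
  have hm1 : ∀ i : Fin d, max 0 (1 - |r i| / (h - e)) ≤ 1 := fun i =>
    max_le zero_le_one (by
      have : 0 ≤ |r i| / (h - e) := div_nonneg (abs_nonneg _) hhe.le
      linarith)
  have hp0 : 0 ≤ p := Finset.prod_nonneg fun i _ => hm0 i
  have hp1 : p ≤ 1 := Finset.prod_le_one (fun i _ => hm0 i) (fun i _ => hm1 i)
  set A : ℝ≥0∞ := ENNReal.ofReal (h - e) ^ d with hAdef
  have hA0 : A ≠ 0 := pow_ne_zero _ (by simp [ENNReal.ofReal_eq_zero]; linarith)
  have hAtop : A ≠ ⊤ := ENNReal.pow_ne_top ENNReal.ofReal_ne_top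
  have hvB : volume B = A := by
    rw [hBdef, volume_pi_pi]
    simp [Real.volume_Icc, hAdef]
  have hvB' : volume B' = A := by
    rw [hB'def, volume_pi_pi]
    simp [Real.volume_Icc, sub_sub_sub_cancel_right, hAdef]
  have hSpi : S = Set.univ.pi fun i => Set.Icc e h ∩ Set.Icc (e - r i) (h - r i) := by
    rw [hSdef, hBdef, hB'def, ← Set.pi_inter_distrib]
  have key : ∀ i : Fin d, volume (Set.Icc e h ∩ Set.Icc (e - r i) (h - r i))
      = ENNReal.ofReal (h - e) * ENNReal.ofReal (max 0 (1 - |r i| / (h - e))) := by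
    intro i
    have h1 : (h - e) * max 0 (1 - |r i| / (h - e)) = max 0 (h - e - |r i|) := by
      have hx : (h - e) * (1 - |r i| / (h - e)) = h - e - |r i| := by
        field_simp
      rw [mul_max_of_nonneg _ _ hhe.le, mul_zero, hx]
    have h2 : min h (h - r i) - max e (e - r i) = h - e - |r i| := by
      rcases le_total 0 (r i) with hs | hs
      · rw [abs_of_nonneg hs, min_eq_right (by linarith), max_eq_left (by linarith)]
        ring
      · rw [abs_of_nonpos hs, min_eq_left (by linarith), max_eq_right (by linarith)]
        ring
    rw [Set.Icc_inter_Icc, Real.volume_Icc]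
    rw [show (h ⊓ (h - r i) - e ⊔ (e - r i)) = h - e - |r i| from h2]
    rw [← ofReal_max_zero, ← h1, ENNReal.ofReal_mul hhe.le]
  have hvS : volume S = A * ENNReal.ofReal p := by
    rw [hSpi, volume_pi_pi]
    simp_rw [key]
    rw [Finset.prod_mul_distrib, Finset.prod_const, Finset.card_univ, Fintype.card_fin,
      ← ENNReal.ofReal_prod_of_nonneg (fun i _ => hm0 i), hAdef, hpdef]
  set μ₀ : Measure (Fin d → ℝ) := (volume B)⁻¹ • volume.restrict B with hμ₀def
  set μ₁ : Measure (Fin d → ℝ) := (volume B')⁻¹ • volume.restrict B' with hμ₁def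
  have happ₀ : ∀ T : Set (Fin d → ℝ), MeasurableSet T → μ₀ T = A⁻¹ * volume (T ∩ B) := by
    intro T hT
    rw [hμ₀def, hvB]
    simp [Measure.restrict_apply hT]
  have happ₁ : ∀ T : Set (Fin d → ℝ), MeasurableSet T → μ₁ T = A⁻¹ * volume (T ∩ B') := by
    intro T hT
    rw [hμ₁def, hvB']
    simp [Measure.restrict_apply hT]
  have hμ₀S : μ₀ S = ENNReal.ofReal p := by
    rw [happ₀ S hSm, hSB, hvS, ← mul_assoc, ENNReal.inv_mul_cancel hA0 hAtop, one_mul]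
  have hμ₁S : μ₁ S = ENNReal.ofReal p := by
    rw [happ₁ S hSm, hSB', hvS, ← mul_assoc, ENNReal.inv_mul_cancel hA0 hAtop, one_mul]
  have hμ₁B : μ₁ B = ENNReal.ofReal p := by
    rw [happ₁ B hBm, ← hSdef, hvS, ← mul_assoc, ENNReal.inv_mul_cancel hA0 hAtop, one_mul]
  have hμ₀univ : μ₀ Set.univ = 1 := by
    rw [happ₀ _ MeasurableSet.univ, Set.univ_inter, hvB, ENNReal.inv_mul_cancel hA0 hAtop]
  have hμ₁univ : μ₁ Set.univ = 1 := by
    rw [happ₁ _ MeasurableSet.univ, Set.univ_inter, hvB', ENNReal.inv_mul_cancel hA0 hAtop]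
  haveI : IsProbabilityMeasure μ₀ := ⟨hμ₀univ⟩
  haveI : IsProbabilityMeasure μ₁ := ⟨hμ₁univ⟩
  have hμ₀Bc : μ₀ Bᶜ = 0 := by
    rw [happ₀ _ hBm.compl, Set.compl_inter_self]
    simp
  have hμ₁Bc : μ₁ Bᶜ = 1 - ENNReal.ofReal p := by
    rw [measure_compl hBm (measure_ne_top μ₁ B), hμ₁univ, hμ₁B]
  have hps : (ENNReal.ofReal p).toReal = p := ENNReal.toReal_ofReal hp0
  have hμ₁BcR : (μ₁ Bᶜ).toReal = 1 - p := by
    rw [hμ₁Bc, ← ENNReal.ofReal_one, ← ENNReal.ofReal_sub _ hp0,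
      ENNReal.toReal_ofReal (by linarith)]
  have hres : μ₁.restrict S = μ₀.restrict S := by
    rw [hμ₀def, hμ₁def, hvB, hvB', Measure.restrict_smul, Measure.restrict_smul,
      Measure.restrict_restrict hSm, Measure.restrict_restrict hSm, hSB, hSB']
  -- the explicit optimal test
  set t : ℝ := min 1 ((1 - W) / p) with htdef
  have ht0 : 0 ≤ t := le_min zero_le_one (div_nonneg (by linarith) hp0)
  have ht1 : t ≤ 1 := min_le_left _ _
  have htp : t * p ≤ 1 - W := by
    rcases eq_or_lt_of_le hp0 with hp | hp
    · rw [← hp, mul_zero]; linarith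
    · calc t * p ≤ ((1 - W) / p) * p :=
            mul_le_mul_of_nonneg_right (min_le_right _ _) hp0
        _ = 1 - W := div_mul_cancel₀ _ hp.ne'
  have hval : p * (1 - t) = max 0 (W - (1 - p)) := by
    rcases eq_or_lt_of_le hp0 with hp | hp
    · rw [← hp, zero_mul, eq_comm, max_eq_left]; linarith
    · have htp' : t * p = min p (1 - W) := by
        rw [htdef, min_mul_of_nonneg _ _ hp0, one_mul, div_mul_cancel₀ _ hp.ne']
      rcases le_total p (1 - W) with hc | hc
      · rw [min_eq_left hc] at htp'
        rw [mul_one_sub, mul_comm p t, htp', sub_self, eq_comm, max_eq_left]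
        linarith
      · rw [min_eq_right hc] at htp'
        rw [mul_one_sub, mul_comm p t, htp', eq_comm, max_eq_right] <;> linarith
  set φ₀ : (Fin d → ℝ) → ℝ :=
    fun x => Set.indicator Bᶜ (fun _ => (1:ℝ)) x + Set.indicator S (fun _ => t) x
    with hφ₀def
  have hφ₀meas : Measurable φ₀ :=
    (measurable_const.indicator hBm.compl).add (measurable_const.indicator hSm)
  have hφ₀bd : ∀ x, 0 ≤ φ₀ x ∧ φ₀ x ≤ 1 := by
    intro x
    by_cases hx : x ∈ B
    · by_cases hx2 : x ∈ S <;>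
        simp [hφ₀def, Set.indicator_apply, hx, hx2, ht0, ht1]
    · have hxS : x ∉ S := fun hxS => hx hxS.1
      simp [hφ₀def, Set.indicator_apply, hx, hxS]
  have hφ₀int₀ : ∫ x, φ₀ x ∂μ₀ = t * p := by
    rw [hφ₀def]
    rw [integral_add ((integrable_const (1:ℝ)).indicator hBm.compl)
      ((integrable_const t).indicator hSm)]
    rw [integral_indicator_const (1:ℝ) hBm.compl, integral_indicator_const t hSm,
      measureReal_def, measureReal_def, hμ₀Bc, hμ₀S, hps]
    simp [mul_comm]
  have hφ₀int₁ : Integrable φ₀ μ₁ :=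
    ((integrable_const (1:ℝ)).indicator hBm.compl).add ((integrable_const t).indicator hSm)
  have hφ₀typeII : ∫ x, (1 - φ₀ x) ∂μ₁ = max 0 (W - (1 - p)) := by
    rw [integral_sub (integrable_const 1) hφ₀int₁]
    have hi : ∫ x, φ₀ x ∂μ₁ = (1 - p) + t * p := by
      rw [hφ₀def]
      rw [integral_add ((integrable_const (1:ℝ)).indicator hBm.compl)
        ((integrable_const t).indicator hSm)]
      rw [integral_indicator_const (1:ℝ) hBm.compl, integral_indicator_const t hSm,
        measureReal_def, measureReal_def, hμ₁BcR, hμ₁S, hps]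
      simp [mul_comm]
    rw [hi, integral_const]
    simp only [measureReal_def, measure_univ, ENNReal.toReal_one, smul_eq_mul, one_mul]
    rw [← hval]; ring
  -- assemble
  unfold beta2Star
  have hbdd : BddBelow (Set.range fun φ : {φ : (Fin d → ℝ) → ℝ // Measurable φ ∧
      (∀ x, 0 ≤ φ x ∧ φ x ≤ 1) ∧ ∫ x, φ x ∂μ₀ ≤ 1 - W} => ∫ x, (1 - φ.1 x) ∂μ₁) := by
    refine ⟨0, ?_⟩
    rintro y ⟨⟨φ, hm, hb, hl⟩, rfl⟩
    exact integral_nonneg fun x => show (0:ℝ) ≤ 1 - φ x by linarith [(hb x).2]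
  apply le_antisymm
  · calc (⨅ φ : {φ : (Fin d → ℝ) → ℝ // Measurable φ ∧ (∀ x, 0 ≤ φ x ∧ φ x ≤ 1) ∧
          ∫ x, φ x ∂μ₀ ≤ 1 - W}, ∫ x, (1 - φ.1 x) ∂μ₁)
        ≤ ∫ x, (1 - φ₀ x) ∂μ₁ := by
          refine ciInf_le hbdd ⟨φ₀, hφ₀meas, hφ₀bd, ?_⟩
          rw [hφ₀int₀]; exact htp
      _ = max 0 (W - (1 - p)) := hφ₀typeII
  · haveI : Nonempty {φ : (Fin d → ℝ) → ℝ // Measurable φ ∧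
        (∀ x, 0 ≤ φ x ∧ φ x ≤ 1) ∧ ∫ x, φ x ∂μ₀ ≤ 1 - W} :=
      ⟨⟨φ₀, hφ₀meas, hφ₀bd, by rw [hφ₀int₀]; exact htp⟩⟩
    apply le_ciInf
    rintro ⟨φ, hφm, hφb, hφl⟩
    refine max_le (integral_nonneg fun x =>
      show (0:ℝ) ≤ 1 - φ x by linarith [(hφb x).2]) ?_
    have hφint₁ : Integrable φ μ₁ :=
      (integrable_const (1:ℝ)).mono' hφm.aestronglyMeasurable
        (ae_of_all _ fun x => by
          rw [Real.norm_eq_abs, abs_of_nonneg (hφb x).1]; exact (hφb x).2)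
    have hφint₀ : Integrable φ μ₀ :=
      (integrable_const (1:ℝ)).mono' hφm.aestronglyMeasurable
        (ae_of_all _ fun x => by
          rw [Real.norm_eq_abs, abs_of_nonneg (hφb x).1]; exact (hφb x).2)
    calc W - (1 - p) = p - (1 - W) := by ring
      _ ≤ p - ∫ x, φ x ∂μ₀ := sub_le_sub_left hφl p
      _ ≤ p - ∫ x in S, φ x ∂μ₀ := sub_le_sub_left
          (setIntegral_le_integral hφint₀ (ae_of_all _ fun x => (hφb x).1)) p
      _ = ∫ x in S, (1 - φ x) ∂μ₁ := by
          rw [integral_sub ((integrable_const (1:ℝ)).restrict) (hφint₁.restrict),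
            setIntegral_const, measureReal_def, hμ₁S, hps, hres]
          simp
      _ ≤ ∫ x, (1 - φ x) ∂μ₁ := setIntegral_le_integral
          ((integrable_const (1:ℝ)).sub hφint₁)
          (ae_of_all _ fun x => show (0:ℝ) ≤ 1 - φ x by linarith [(hφb x).2])
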